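/- Let β = (β_n) be a Cantor real base, x ∈ [0,1], and a = (a_n) a sequence of natural numbers. Then a equals the greedy β-expansion of x if and only if val_β(a) = x and for every ℓ ∈ ℕ, ∑_{n=ℓ+1}^∞ a_n / ∏_{i=0}^n β_i < 1 / ∏_{i=0}^ℓ β_i. -/

import Mathlib

open Filter

/-- Product of the first `n+1` terms of the base sequence. -/
noncomputable def cprod (β : ℕ → ℝ) (n : ℕ) : ℝ := ∏ i ∈ Finset.range (n+1), β i

/-- A Cantor real base: all terms exceed 1 and the partial products tend to infinity. -/
def IsCantorBase (β : ℕ → ℝ) : Prop :=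
  (∀ n, 1 < β n) ∧ Tendsto (cprod β) atTop atTop

/-- Value of a real-digit sequence in a Cantor base. -/
noncomputable def valB (β : ℕ → ℝ) (a : ℕ → ℝ) : ℝ := ∑' n, a n / cprod β n

/-- Value of a natural-digit sequence in a Cantor base. -/
noncomputable def valN (β : ℕ → ℝ) (a : ℕ → ℕ) : ℝ := valB β (fun n => (a n : ℝ))

/-- Remainders of the greedy algorithm. -/
noncomputable def greedyRem (β : ℕ → ℝ) (x : ℝ) : ℕ → ℝ
  | 0 => β 0 * x - ⌊β 0 * x⌋
  | n+1 => β (n+1) * greedyRem β x n - ⌊β (n+1) * greedyRem β x n⌋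

/-- Digits of the greedy expansion. -/
noncomputable def greedy (β : ℕ → ℝ) (x : ℝ) : ℕ → ℕ
  | 0 => (⌊β 0 * x⌋).toNat
  | n+1 => (⌊β (n+1) * greedyRem β x n⌋).toNat

/-- Remainders of the quasi-greedy algorithm started at `1`:
at each step the largest digit keeping the remainder strictly positive is chosen. -/
noncomputable def qRem (β : ℕ → ℝ) : ℕ → ℝ
  | 0 => β 0 - (⌈β 0⌉ - 1)
  | n+1 => β (n+1) * qRem β n - (⌈β (n+1) * qRem β n⌉ - 1)

/-- Digits of the quasi-greedy expansion of `1`. -/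
noncomputable def quasiGreedy (β : ℕ → ℝ) : ℕ → ℕ
  | 0 => (⌈β 0⌉ - 1).toNat
  | n+1 => (⌈β (n+1) * qRem β n⌉ - 1).toNat

/-- The `n`-shifted base `β^{(n)}`. -/
def shiftBase (β : ℕ → ℝ) (n : ℕ) : ℕ → ℝ := fun k => β (n + k)

/-- The `n`-fold shift `σ^n` of a digit sequence. -/
def shiftSeq (a : ℕ → ℕ) (n : ℕ) : ℕ → ℕ := fun k => a (n + k)

/-- Strict lexicographic order on digit sequences. -/
def LexLt (a b : ℕ → ℕ) : Prop := ∃ ℓ, (∀ k, k < ℓ → a k = b k) ∧ a ℓ < b ℓ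

/-- Lexicographic order on digit sequences. -/
def LexLe (a b : ℕ → ℕ) : Prop := LexLt a b ∨ a = b

/-- The set of greedy expansions of points of `[0,1)`. -/
def Dset (β : ℕ → ℝ) : Set (ℕ → ℕ) := {a | ∃ x ∈ Set.Ico (0:ℝ) 1, a = greedy β x}

open Topology

lemma cprod_pos {β : ℕ → ℝ} (hβ : ∀ n, 1 < β n) (n : ℕ) : 0 < cprod β n :=
  Finset.prod_pos fun i _ => lt_trans one_pos (hβ i)

lemma cprod_succ (β : ℕ → ℝ) (n : ℕ) : cprod β (n+1) = cprod β n * β (n+1) :=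
  Finset.prod_range_succ β (n+1)

lemma cprod_zero (β : ℕ → ℝ) : cprod β 0 = β 0 := by
  simp [cprod]

lemma floor_key {y c : ℝ} {m : ℕ} (hy : y = m + c) (h0 : 0 ≤ c) (h1 : c < 1) :
    ⌊y⌋ = (m : ℤ) ∧ y - ⌊y⌋ = c := by
  have hf : ⌊y⌋ = (m : ℤ) := by
    rw [Int.floor_eq_iff]
    constructor <;> push_cast <;> linarith
  refine ⟨hf, ?_⟩
  rw [hf]; push_cast; linarith

lemma rem_nonneg {β : ℕ → ℝ} {x : ℝ} (n : ℕ) : 0 ≤ greedyRem β x n := by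
  cases n with
  | zero => simpa [greedyRem, sub_nonneg] using Int.floor_le (β 0 * x)
  | succ n => simpa [greedyRem, sub_nonneg] using Int.floor_le (β (n+1) * greedyRem β x n)

lemma rem_lt_one {β : ℕ → ℝ} {x : ℝ} (n : ℕ) : greedyRem β x n < 1 := by
  cases n with
  | zero => simpa [greedyRem] using Int.fract_lt_one (β 0 * x)
  | succ n => simpa [greedyRem] using Int.fract_lt_one (β (n+1) * greedyRem β x n)

lemma greedy_cast_zero {β : ℕ → ℝ} {x : ℝ} (hb : 0 < β 0) (hx : 0 ≤ x) :
    (greedy β x 0 : ℝ) = (⌊β 0 * x⌋ : ℝ) := by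
  have h : (0:ℤ) ≤ ⌊β 0 * x⌋ := Int.floor_nonneg.mpr (mul_nonneg hb.le hx)
  simp [greedy]
  exact_mod_cast congrArg (Int.cast : ℤ → ℝ) (Int.toNat_of_nonneg h)

lemma greedy_cast_succ {β : ℕ → ℝ} {x : ℝ} (n : ℕ) (hb : 0 < β (n+1)) :
    (greedy β x (n+1) : ℝ) = (⌊β (n+1) * greedyRem β x n⌋ : ℝ) := by
  have h : (0:ℤ) ≤ ⌊β (n+1) * greedyRem β x n⌋ :=
    Int.floor_nonneg.mpr (mul_nonneg hb.le (rem_nonneg n))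
  simp [greedy]
  exact_mod_cast congrArg (Int.cast : ℤ → ℝ) (Int.toNat_of_nonneg h)

lemma psum {β : ℕ → ℝ} {x : ℝ} (hβ : ∀ n, 1 < β n) (hx : 0 ≤ x) (N : ℕ) :
    ∑ k ∈ Finset.range (N+1), (greedy β x k : ℝ) / cprod β k
      = x - greedyRem β x N / cprod β N := by
  induction N with
  | zero =>
    have hb := lt_trans one_pos (hβ 0)
    rw [Finset.sum_range_one, greedy_cast_zero hb hx, cprod_zero]
    have hr : greedyRem β x 0 = β 0 * x - ⌊β 0 * x⌋ := rfl
    rw [hr]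
    field_simp
    ring
  | succ N ih =>
    have hb := lt_trans one_pos (hβ (N+1))
    have hcN := cprod_pos hβ N
    rw [Finset.sum_range_succ, ih, greedy_cast_succ N hb, cprod_succ]
    have hr : greedyRem β x (N+1) = β (N+1) * greedyRem β x N - ⌊β (N+1) * greedyRem β x N⌋ := rfl
    rw [hr]
    field_simp
    ring

theorem stmt_5 (β : ℕ → ℝ) (hβ : IsCantorBase β) (x : ℝ)
    (hx : x ∈ Set.Icc (0:ℝ) 1) (a : ℕ → ℕ) :
    a = greedy β x ↔
      (Summable (fun n => (a n : ℝ) / cprod β n) ∧ valN β a = x ∧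
        ∀ ℓ : ℕ, (∑' n : ℕ, (a (ℓ + 1 + n) : ℝ) / cprod β (ℓ + 1 + n)) < 1 / cprod β ℓ) := by
  obtain ⟨hβ1, hβ2⟩ := hβ
  obtain ⟨hx0, hx1⟩ := hx
  have hc := cprod_pos hβ1
  constructor
  · rintro rfl
    set f : ℕ → ℝ := fun n => (greedy β x n : ℝ) / cprod β n with hf
    have hfnn : ∀ n, 0 ≤ f n := fun n => div_nonneg (Nat.cast_nonneg _) (hc n).le
    have hbound : ∀ n, ∑ i ∈ Finset.range n, f i ≤ x := by
      intro n
      cases n with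
      | zero => simpa using hx0
      | succ N =>
        rw [psum hβ1 hx0 N]
        have h1 : 0 ≤ greedyRem β x N / cprod β N :=
          div_nonneg (rem_nonneg N) (hc N).le
        linarith
    have hsum : Summable f := summable_of_sum_range_le hfnn hbound
    have h0 : Tendsto (fun N => greedyRem β x N / cprod β N) atTop (𝓝 0) := by
      refine squeeze_zero (fun n => div_nonneg (rem_nonneg n) (hc n).le)
        (fun n => ?_) hβ2.inv_tendsto_atTop
      rw [Pi.inv_apply, inv_eq_one_div]
      gcongr
      · exact (hc n).le
      · exact (rem_lt_one n).le
    have htend1 : Tendsto (fun N => ∑ i ∈ Finset.range (N+1), f i) atTop (𝓝 x) := by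
      have h2 : Tendsto (fun N : ℕ => x - greedyRem β x N / cprod β N) atTop (𝓝 (x - 0)) :=
        tendsto_const_nhds.sub h0
      rw [sub_zero] at h2
      exact h2.congr (fun N => (psum hβ1 hx0 N).symm)
    have htend : Tendsto (fun N => ∑ i ∈ Finset.range N, f i) atTop (𝓝 x) :=
      (tendsto_add_atTop_iff_nat 1).mp htend1
    have hhs : HasSum f x := (hsum.hasSum_iff_tendsto_nat).mpr htend
    refine ⟨hsum, hhs.tsum_eq, ?_⟩
    intro ℓ
    have hkey := Summable.sum_add_tsum_nat_add (ℓ+1) hsum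
    have htsum : ∑' n, f n = x := hhs.tsum_eq
    have hps := psum hβ1 hx0 ℓ
    have heq : (∑' n : ℕ, (greedy β x (ℓ+1+n) : ℝ) / cprod β (ℓ+1+n))
        = ∑' i, f (i + (ℓ+1)) := by
      refine tsum_congr fun n => ?_
      simp only [hf]
      rw [Nat.add_comm]
    rw [heq]
    have h3 : ∑' i, f (i + (ℓ+1)) = greedyRem β x ℓ / cprod β ℓ := by
      rw [htsum, hps] at hkey
      linarith
    rw [h3]
    exact (div_lt_div_iff_of_pos_right (hc ℓ)).mpr (rem_lt_one ℓ)
  · rintro ⟨hsum, hval, htail⟩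
    set f : ℕ → ℝ := fun n => (a n : ℝ) / cprod β n with hf
    set T : ℕ → ℝ := fun ℓ => ∑' n, f (ℓ + 1 + n) with hT
    have hTlt : ∀ ℓ, T ℓ < 1 / cprod β ℓ := fun ℓ => htail ℓ
    have hshift : ∀ k, Summable (fun n => f (k + n)) := by
      intro k
      exact ((summable_nat_add_iff k).mpr hsum).congr (fun n => by rw [Nat.add_comm])
    have hTnn : ∀ ℓ, 0 ≤ T ℓ :=
      fun ℓ => tsum_nonneg (fun n => div_nonneg (Nat.cast_nonneg _) (hc _).le)
    have hcT : ∀ ℓ, cprod β ℓ * T ℓ < 1 := by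
      intro ℓ
      have h := (lt_div_iff₀ (hc ℓ)).mp (hTlt ℓ)
      linarith
    have hcTnn : ∀ ℓ, 0 ≤ cprod β ℓ * T ℓ := fun ℓ => mul_nonneg (hc ℓ).le (hTnn ℓ)
    have hTrec : ∀ ℓ, T ℓ = f (ℓ+1) + T (ℓ+1) := by
      intro ℓ
      have h := Summable.tsum_eq_zero_add (hshift (ℓ+1))
      show (∑' n, f (ℓ + 1 + n)) = f (ℓ+1) + ∑' n, f (ℓ + 1 + 1 + n)
      rw [h, Nat.add_zero]
      congr 1
      refine tsum_congr fun n => ?_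
      congr 1
      omega
    have hvx : ∑' n, f n = x := hval
    have hsplit : ∀ ℓ, x = (∑ k ∈ Finset.range (ℓ+1), f k) + T ℓ := by
      intro ℓ
      have h := Summable.sum_add_tsum_nat_add (ℓ+1) hsum
      have h2 : (∑' i, f (i + (ℓ+1))) = T ℓ := tsum_congr fun n => by
        congr 1; omega
      rw [h2, hvx] at h
      linarith
    have main : ∀ ℓ, greedy β x ℓ = a ℓ ∧ greedyRem β x ℓ = cprod β ℓ * T ℓ := by
      intro ℓ
      induction ℓ with
      | zero =>
        have h := hsplit 0
        rw [Finset.sum_range_one] at h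
        have hc0 : cprod β 0 = β 0 := cprod_zero β
        have hy : β 0 * x = (a 0 : ℝ) + cprod β 0 * T 0 := by
          have hb0 : β 0 ≠ 0 := (lt_trans one_pos (hβ1 0)).ne'
          rw [h, show f 0 = (a 0 : ℝ) / cprod β 0 from rfl, hc0]
          field_simp
        obtain ⟨hfl, hrem⟩ := floor_key hy (hcTnn 0) (hcT 0)
        constructor
        · simp [greedy, hfl]
        · exact hrem
      | succ ℓ ih =>
        obtain ⟨_, hrℓ⟩ := ih
        have hy : β (ℓ+1) * greedyRem β x ℓ
            = (a (ℓ+1) : ℝ) + cprod β (ℓ+1) * T (ℓ+1) := by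
          rw [hrℓ, hTrec ℓ, show f (ℓ+1) = (a (ℓ+1) : ℝ) / cprod β (ℓ+1) from rfl,
            cprod_succ]
          have h1 : cprod β ℓ ≠ 0 := (hc ℓ).ne'
          have h2 : β (ℓ+1) ≠ 0 := (lt_trans one_pos (hβ1 (ℓ+1))).ne'
          field_simp
        obtain ⟨hfl, hrem⟩ := floor_key hy (hcTnn (ℓ+1)) (hcT (ℓ+1))
        constructor
        · simp [greedy, hfl]
        · exact hrem
    funext n
    exact (main n).1.symm
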